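/- Let θ : Fin n₁ → ℝ satisfy, for every i < n₁, θ i = |C_i| − Σ_{j ∈ C_i, j < n₁} (1 + θ j)⁻¹ and θ i > 0, and let G' be the Generation Matrix of the 1-order subtree T⁽¹⁾ with node weights w' i = √(1 + θ i) and edge weights u' i = 1/√(1 + θ i) for i ≠ 0. Then M_Tᵀ · M_T is invertible and for every x : Fin n₁ → ℝ, (M_Tᵀ · M_T)⁻¹ · x = G'⁻¹ · ((G'ᵀ)⁻¹ · x); equivalently, (M_Tᵀ · M_T)⁻¹ = G'⁻¹ · (G'ᵀ)⁻¹, so applying (M_Tᵀ · M_T)⁻¹ amounts to an upward propagation followed by a downward propagation with respect to G'. -/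

import Mathlib

open Matrix Finset

set_option maxHeartbeats 1600000 in
/-- Applying `(M_Tᵀ ⬝ M_T)⁻¹` amounts to an upward propagation followed by a downward
propagation with respect to the inner-product-equivalent Generation Matrix `G'`:
`M_Tᵀ ⬝ M_T` is invertible, `(M_Tᵀ M_T)⁻¹ x = G'⁻¹ ((G'ᵀ)⁻¹ x)` for every `x`, and
`(M_Tᵀ M_T)⁻¹ = G'⁻¹ (G'ᵀ)⁻¹`. -/
theorem gmc_inverse_via_propagations (n n₁ : ℕ) [NeZero n]
    (f : Fin n → Fin n) (hf0 : f 0 = 0) (hf : ∀ i : Fin n, i ≠ 0 → f i < i)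
    (hn₁ : 1 ≤ n₁) (hn₁n : n₁ < n)
    (hleaf : ∀ i : Fin n, (∃ j : Fin n, j ≠ 0 ∧ f j = i) ↔ (i : ℕ) < n₁)
    (M : Matrix (Fin n) (Fin n₁) ℝ)
    (hM : ∀ (i : Fin n) (j : Fin n₁), M i j =
      if (i : ℕ) = (j : ℕ) then 1
      else if i ≠ 0 ∧ (j : ℕ) = (f i : ℕ) then -1 else 0)
    (θ : Fin n₁ → ℝ)
    (hθ : ∀ i : Fin n₁, θ i =
      ((Finset.univ.filter fun j : Fin n =>
        j ≠ 0 ∧ f j = Fin.castLE hn₁n.le i).card : ℝ) -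
      ∑ j : Fin n₁,
        (if Fin.castLE hn₁n.le j ≠ 0 ∧
            f (Fin.castLE hn₁n.le j) = Fin.castLE hn₁n.le i
         then (1 + θ j)⁻¹ else 0))
    (hθpos : ∀ i : Fin n₁, 0 < θ i)
    (G' : Matrix (Fin n₁) (Fin n₁) ℝ)
    (hG' : ∀ a b : Fin n₁, G' a b =
      if a = b then Real.sqrt (1 + θ a)
      else if (a : ℕ) ≠ 0 ∧ (b : ℕ) = (f (Fin.castLE hn₁n.le a) : ℕ)
        then -(1 / Real.sqrt (1 + θ a))
      else 0) :
    IsUnit (Mᵀ * M).det ∧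
    (∀ x : Fin n₁ → ℝ,
      (Mᵀ * M)⁻¹.mulVec x = G'⁻¹.mulVec ((G'ᵀ)⁻¹.mulVec x)) ∧
    (Mᵀ * M)⁻¹ = G'⁻¹ * (G'ᵀ)⁻¹ := by
  have hθ1 : ∀ j : Fin n₁, (0:ℝ) < 1 + θ j := fun j => by linarith [hθpos j]
  have hsne : ∀ j : Fin n₁, Real.sqrt (1 + θ j) ≠ 0 :=
    fun j => ne_of_gt (Real.sqrt_pos.mpr (hθ1 j))
  have hfd : ∀ j : Fin n₁, (j:ℕ) = 0 ∨ ((f (Fin.castLE hn₁n.le j)):ℕ) < (j:ℕ) := by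
    intro j
    by_cases h : (j:ℕ) = 0
    · exact Or.inl h
    · right
      have hD0 : Fin.castLE hn₁n.le j ≠ 0 := by
        intro hc
        apply h
        have : ((Fin.castLE hn₁n.le j : Fin n):ℕ) = ((0 : Fin n):ℕ) := by rw [hc]
        simpa using this
      exact hf (Fin.castLE hn₁n.le j) hD0
  -- entries of Mᵀ * M
  have claimM : ∀ a b : Fin n₁, (Mᵀ * M) a b =
      (if a = b then
        1 + ((Finset.univ.filter fun j : Fin n =>
          j ≠ 0 ∧ f j = Fin.castLE hn₁n.le a).card : ℝ) else 0)
      + (if (a:ℕ) ≠ 0 ∧ (b:ℕ) = ((f (Fin.castLE hn₁n.le a)):ℕ) then -1 else 0)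
      + (if (b:ℕ) ≠ 0 ∧ (a:ℕ) = ((f (Fin.castLE hn₁n.le b)):ℕ) ∧ a ≠ b then -1 else 0) := by
    intro a b
    rw [Matrix.mul_apply]
    have hterm : ∀ i : Fin n, Mᵀ a i * M i b =
        ((if a = b then (if i = Fin.castLE hn₁n.le a then (1:ℝ) else 0) else 0)
        + (if a = b then (if i ≠ 0 ∧ f i = Fin.castLE hn₁n.le a then (1:ℝ) else 0) else 0))
        + (if (a:ℕ) ≠ 0 ∧ (b:ℕ) = ((f (Fin.castLE hn₁n.le a)):ℕ) then
            (if i = Fin.castLE hn₁n.le a then (-1:ℝ) else 0) else 0)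
        + (if (b:ℕ) ≠ 0 ∧ (a:ℕ) = ((f (Fin.castLE hn₁n.le b)):ℕ) ∧ a ≠ b then
            (if i = Fin.castLE hn₁n.le b then (-1:ℝ) else 0) else 0) := by
      intro i
      have hfi : (i:ℕ) = 0 ∨ ((f i):ℕ) < (i:ℕ) := by
        by_cases h : i = 0
        · left; rw [h]; simp
        · exact Or.inr (hf i h)
      have hia : ¬((i:ℕ) = (a:ℕ)) ∨ ((f i):ℕ) = ((f (Fin.castLE hn₁n.le a)):ℕ) := by
        by_cases h : (i:ℕ) = (a:ℕ)
        · right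
          have : i = Fin.castLE hn₁n.le a := Fin.val_injective h
          rw [this]
        · exact Or.inl h
      have hib : ¬((i:ℕ) = (b:ℕ)) ∨ ((f i):ℕ) = ((f (Fin.castLE hn₁n.le b)):ℕ) := by
        by_cases h : (i:ℕ) = (b:ℕ)
        · right
          have : i = Fin.castLE hn₁n.le b := Fin.val_injective h
          rw [this]
        · exact Or.inl h
      have hfa := hfd a
      have hfb := hfd b
      rw [Matrix.transpose_apply, hM i a, hM i b]
      simp only [ne_eq, Fin.ext_iff, Fin.coe_castLE, Fin.val_zero]
      split_ifs <;> first | (exfalso; omega) | norm_num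
    rw [Finset.sum_congr rfl fun i _ => hterm i]
    rw [Finset.sum_add_distrib, Finset.sum_add_distrib, Finset.sum_add_distrib]
    by_cases h1 : a = b <;>
      by_cases h2 : (a:ℕ) ≠ 0 ∧ (b:ℕ) = ((f (Fin.castLE hn₁n.le a)):ℕ) <;>
      by_cases h3 : (b:ℕ) ≠ 0 ∧ (a:ℕ) = ((f (Fin.castLE hn₁n.le b)):ℕ) ∧ a ≠ b <;>
      simp [h1, h2, h3, Finset.sum_boole, Finset.sum_ite_eq']
  -- entries of G'ᵀ * G'
  have claimG : ∀ a b : Fin n₁, (G'ᵀ * G') a b =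
      (if a = b then
        (1 + θ a) + (∑ j : Fin n₁,
          if Fin.castLE hn₁n.le j ≠ 0 ∧
              f (Fin.castLE hn₁n.le j) = Fin.castLE hn₁n.le a
          then (1 + θ j)⁻¹ else 0) else 0)
      + (if (a:ℕ) ≠ 0 ∧ (b:ℕ) = ((f (Fin.castLE hn₁n.le a)):ℕ) then -1 else 0)
      + (if (b:ℕ) ≠ 0 ∧ (a:ℕ) = ((f (Fin.castLE hn₁n.le b)):ℕ) ∧ a ≠ b then -1 else 0) := by
    intro a b
    rw [Matrix.mul_apply]
    have hterm : ∀ k : Fin n₁, G'ᵀ a k * G' k b =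
        ((if a = b then (if k = a then (1 + θ k) else 0) else 0)
        + (if a = b then
            (if Fin.castLE hn₁n.le k ≠ 0 ∧
                f (Fin.castLE hn₁n.le k) = Fin.castLE hn₁n.le a
             then (1 + θ k)⁻¹ else 0) else 0))
        + (if (a:ℕ) ≠ 0 ∧ (b:ℕ) = ((f (Fin.castLE hn₁n.le a)):ℕ) then
            (if k = a then (-1:ℝ) else 0) else 0)
        + (if (b:ℕ) ≠ 0 ∧ (a:ℕ) = ((f (Fin.castLE hn₁n.le b)):ℕ) ∧ a ≠ b then
            (if k = b then (-1:ℝ) else 0) else 0) := by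
      intro k
      have hss : Real.sqrt (1 + θ k) * Real.sqrt (1 + θ k) = 1 + θ k :=
        Real.mul_self_sqrt (hθ1 k).le
      have hsm : Real.sqrt (1 + θ k) * -(1 / Real.sqrt (1 + θ k)) = -1 := by
        field_simp
        rw [div_self (hsne k)]
      have hms : -(1 / Real.sqrt (1 + θ k)) * Real.sqrt (1 + θ k) = -1 := by
        field_simp
        rw [div_self (hsne k)]
      have hmm : -(1 / Real.sqrt (1 + θ k)) * -(1 / Real.sqrt (1 + θ k)) = (1 + θ k)⁻¹ := by
        rw [← hss]
        field_simp
        rw [Real.sqrt_sq (Real.sqrt_nonneg _)]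
      have hfk := hfd k
      have hfa := hfd a
      have hfb := hfd b
      have hka : ¬((k:ℕ) = (a:ℕ)) ∨ ((f (Fin.castLE hn₁n.le k)):ℕ) = ((f (Fin.castLE hn₁n.le a)):ℕ) := by
        by_cases h : (k:ℕ) = (a:ℕ)
        · right
          have : k = a := Fin.val_injective h
          rw [this]
        · exact Or.inl h
      have hkb : ¬((k:ℕ) = (b:ℕ)) ∨ ((f (Fin.castLE hn₁n.le k)):ℕ) = ((f (Fin.castLE hn₁n.le b)):ℕ) := by
        by_cases h : (k:ℕ) = (b:ℕ)
        · right
          have : k = b := Fin.val_injective h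
          rw [this]
        · exact Or.inl h
      rw [Matrix.transpose_apply, hG' k a, hG' k b]
      simp only [ne_eq, Fin.ext_iff, Fin.coe_castLE, Fin.val_zero]
      split_ifs <;>
        first
          | (exfalso; omega)
          | linarith [hss, hsm, hms, hmm]
          | norm_num
    rw [Finset.sum_congr rfl fun k _ => hterm k]
    rw [Finset.sum_add_distrib, Finset.sum_add_distrib, Finset.sum_add_distrib]
    by_cases h1 : a = b <;>
      by_cases h2 : (a:ℕ) ≠ 0 ∧ (b:ℕ) = ((f (Fin.castLE hn₁n.le a)):ℕ) <;>
      by_cases h3 : (b:ℕ) ≠ 0 ∧ (a:ℕ) = ((f (Fin.castLE hn₁n.le b)):ℕ) ∧ a ≠ b <;>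
      simp [h1, h2, h3, Finset.sum_ite_eq']
  -- the Cholesky-type factorization
  have key : Mᵀ * M = G'ᵀ * G' := by
    ext a b
    rw [claimM a b, claimG a b]
    have hdiag : (1:ℝ) + ((Finset.univ.filter fun j : Fin n =>
          j ≠ 0 ∧ f j = Fin.castLE hn₁n.le a).card : ℝ)
        = (1 + θ a) + (∑ j : Fin n₁,
            if Fin.castLE hn₁n.le j ≠ 0 ∧
                f (Fin.castLE hn₁n.le j) = Fin.castLE hn₁n.le a
            then (1 + θ j)⁻¹ else 0) := by
      have h := hθ a
      linarith [h]
    by_cases h1 : a = b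
    · rw [if_pos h1, if_pos h1, ← h1, hdiag]
    · rw [if_neg h1, if_neg h1]
  -- G' is lower triangular with nonzero diagonal
  have hGlt : ∀ i j : Fin n₁, i < j → G' i j = 0 := by
    intro i j hij
    have hij' : (i:ℕ) < (j:ℕ) := hij
    rw [hG', if_neg (ne_of_lt hij), if_neg]
    rintro ⟨hi0, hji⟩
    have := hfd i
    omega
  have hdet : G'.det ≠ 0 := by
    rw [Matrix.det_of_lowerTriangular G' hGlt]
    refine Finset.prod_ne_zero_iff.mpr fun i _ => ?_
    rw [hG', if_pos rfl]
    exact hsne i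
  have hdetU : IsUnit G'.det := isUnit_iff_ne_zero.mpr hdet
  have hdetMM : IsUnit (Mᵀ * M).det := by
    rw [key, Matrix.det_mul, Matrix.det_transpose]
    exact hdetU.mul hdetU
  have hinv : (Mᵀ * M)⁻¹ = G'⁻¹ * (G'ᵀ)⁻¹ := by
    rw [key, Matrix.mul_inv_rev]
  exact ⟨hdetMM, fun x => by rw [hinv, Matrix.mulVec_mulVec], hinv⟩
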